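/- (Coercivity II algebra) Let Kψ, Qψ > 0 and C₅ = (2/5)(QψKψ)^{-1/4}. Suppose K, Q ≥ 0, P, S real satisfy: P ≤ C₅ Q^{1/4} K^{5/4}, S ≤ c Q^{1/4} K^{5/4} for some c > 0, and Q·K < (1−δ)·Qψ·Kψ with δ ∈ (0,1). Then K − (5/2)P ≥ δ'·S, where δ' = (5C₅/(2c))·(1 − (1−δ)^{1/4})/(1−δ)^{1/4} > 0. -/

import Mathlib

/-- Coercivity II algebra. -/
theorem stmt_4 (Kψ Qψ : ℝ) (hKψ : 0 < Kψ) (hQψ : 0 < Qψ)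
    (C₅ : ℝ) (hC₅ : C₅ = (2 / 5) * (Qψ * Kψ) ^ (-(1:ℝ)/4))
    (K Q P S c δ : ℝ) (hK : 0 ≤ K) (hQ : 0 ≤ Q) (hc : 0 < c)
    (hδ : δ ∈ Set.Ioo (0:ℝ) 1)
    (hGN : P ≤ C₅ * Q ^ ((1:ℝ)/4) * K ^ ((5:ℝ)/4))
    (hS : S ≤ c * Q ^ ((1:ℝ)/4) * K ^ ((5:ℝ)/4))
    (hsub : Q * K < (1 - δ) * (Qψ * Kψ)) :
    0 < (5 * C₅ / (2 * c)) * (1 - (1 - δ) ^ ((1:ℝ)/4)) / (1 - δ) ^ ((1:ℝ)/4) ∧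
    K - (5/2) * P ≥
      ((5 * C₅ / (2 * c)) * (1 - (1 - δ) ^ ((1:ℝ)/4)) / (1 - δ) ^ ((1:ℝ)/4)) * S := by
  obtain ⟨hδ0, hδ1⟩ := hδ
  have hA : (0:ℝ) < Qψ * Kψ := mul_pos hQψ hKψ
  have h1δ : (0:ℝ) < 1 - δ := by linarith
  set θ : ℝ := (1 - δ) ^ ((1:ℝ)/4) with hθdef
  set a : ℝ := (Qψ * Kψ) ^ ((1:ℝ)/4) with hadef
  have hθ0 : 0 < θ := Real.rpow_pos_of_pos h1δ _
  have hθ1 : θ < 1 := by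
    have := Real.rpow_lt_one h1δ.le (by linarith) (by norm_num : (0:ℝ) < 1/4)
    simpa [hθdef] using this
  have ha0 : 0 < a := Real.rpow_pos_of_pos hA _
  have hid : C₅ * a = 2/5 := by
    rw [hC₅, hadef, mul_assoc, ← Real.rpow_add hA]
    norm_num
  have hC₅pos : 0 < C₅ := by
    have : C₅ = (2/5) / a := by
      field_simp at hid ⊢; linarith [hid]
    rw [this]; positivity
  set δ' : ℝ := (5 * C₅ / (2 * c)) * (1 - θ) / θ with hδ'def
  have hδ'pos : 0 < δ' := by
    have h1θ : 0 < 1 - θ := by linarith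
    rw [hδ'def]
    positivity
  refine ⟨hδ'pos, ?_⟩
  -- key bound: Q^{1/4} K^{5/4} ≤ θ * a * K
  set B : ℝ := Q ^ ((1:ℝ)/4) * K ^ ((5:ℝ)/4) with hBdef
  have hB : B ≤ θ * a * K := by
    have hK54 : K ^ ((5:ℝ)/4) = K ^ ((1:ℝ)/4) * K := by
      have h := Real.rpow_add' hK (show (1:ℝ)/4 + 1 ≠ 0 by norm_num)
      norm_num at h
      exact h
    have hQK : Q ^ ((1:ℝ)/4) * K ^ ((1:ℝ)/4) = (Q * K) ^ ((1:ℝ)/4) :=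
      (Real.mul_rpow hQ hK).symm
    have hmono : (Q * K) ^ ((1:ℝ)/4) ≤ ((1 - δ) * (Qψ * Kψ)) ^ ((1:ℝ)/4) :=
      Real.rpow_le_rpow (mul_nonneg hQ hK) hsub.le (by norm_num)
    have hsplit : ((1 - δ) * (Qψ * Kψ)) ^ ((1:ℝ)/4) = θ * a :=
      Real.mul_rpow h1δ.le hA.le
    calc B = (Q ^ ((1:ℝ)/4) * K ^ ((1:ℝ)/4)) * K := by rw [hBdef, hK54]; ring
      _ = (Q * K) ^ ((1:ℝ)/4) * K := by rw [hQK]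
      _ ≤ ((1 - δ) * (Qψ * Kψ)) ^ ((1:ℝ)/4) * K :=
          mul_le_mul_of_nonneg_right hmono hK
      _ = θ * a * K := by rw [hsplit]
  have h1 : K - (5/2) * P ≥ (1 - θ) * K := by
    have h2 : (5/2) * C₅ * B ≤ (5/2) * C₅ * (θ * a * K) :=
      mul_le_mul_of_nonneg_left hB (by positivity)
    have h3 : (5/2) * C₅ * (θ * a * K) = θ * K := by
      linear_combination (5/2) * θ * K * hid
    have h4 : P ≤ C₅ * B := by rw [hBdef]; linarith [hGN]
    nlinarith [h2, h3, h4]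
  have h5 : δ' * S ≤ (1 - θ) * K := by
    have h6 : δ' * S ≤ δ' * (c * B) := by
      have : S ≤ c * B := by rw [hBdef]; linarith [hS]
      exact mul_le_mul_of_nonneg_left this hδ'pos.le
    have h7 : δ' * (c * B) ≤ δ' * (c * (θ * a * K)) :=
      mul_le_mul_of_nonneg_left (mul_le_mul_of_nonneg_left hB hc.le) hδ'pos.le
    have h8 : δ' * (c * (θ * a * K)) = (1 - θ) * K := by
      rw [hδ'def]
      field_simp
      linear_combination (5 * (1 - θ) * K) * hid
    linarith
  linarith
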